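/- Single-client federated unlearning is exact: consider the quantized federated pipeline in which, additionally, each client l forms the count vector q^(l) indexed by quantization bins (q^(l)_j equals the number of points of X^(l) whose nearest local centroid is quantized into bin j), q = Σ_l q^(l), and the server's output C_s is sampled from the distribution determined by q alone (K-means++ initialization with parameter K, followed by a cost-non-increasing refinement, on the multiset of bin centers with multiplicities q). Upon a removal request X_R ⊆ X^(l) with |X^(l) ∖ X_R| ≥ K, client l applies Algorithm 3 to its K-tuple and recomputes its count vector from the resulting K-tuple and X^(l) ∖ X_R, the other clients are unchanged, and the server resamples C_s from the distribution determined by the new aggregate q'. Then the joint distribution of (C^(1),…,C^(L), C_s) after this unlearning procedure equals the joint distribution obtained by running the pipeline from scratch on the dataset in which X^(l) is replaced by X^(l) ∖ X_R. -/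

import Mathlib

open scoped BigOperators Classical

noncomputable section

abbrev Pt (d : ℕ) := EuclideanSpace ℝ (Fin d)

variable {d : ℕ}

/-- Distance from a point to a finite set of centroids (`0` if the set is empty). -/
def dSet (x : Pt d) (C : Finset (Pt d)) : ℝ :=
  if h : C.Nonempty then C.inf' h fun c => dist x c else 0

/-- `K`-means cost of a multiset of points w.r.t. a finite centroid set. -/
def kcost (X : Multiset (Pt d)) (C : Finset (Pt d)) : ℝ :=
  (X.map fun x => dSet x C ^ 2).sum

/-- Optimal `K`-means objective. -/
def optCost (K : ℕ) (X : Multiset (Pt d)) : ℝ :=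
  sInf {v | ∃ C : Finset (Pt d), C.Nonempty ∧ C.card ≤ K ∧ v = kcost X C}

/-- Set of entries of the tuple `c` with index `< j`. -/
def prefSet {K : ℕ} (c : Fin K → Pt d) (j : Fin K) : Finset (Pt d) :=
  (Finset.univ.filter fun i => i < j).image c

/-- Probability of picking `c j` as the `j`-th centroid in K-means++ initialization on `X`,
given that the previous centroids are the entries of `c` with index `< j`. -/
def stepProb (X : Multiset (Pt d)) {K : ℕ} (c : Fin K → Pt d) (j : Fin K) : ℝ :=
  if (j : ℕ) = 0 then (X.count (c j) : ℝ) / (Multiset.card X : ℝ)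
  else (X.count (c j) : ℝ) * dSet (c j) (prefSet c j) ^ 2 / kcost X (prefSet c j)

/-- PMF of K-means++ initialization with parameter `K` on the multiset `X`,
as a function on `K`-tuples of points. -/
def kmppProb (X : Multiset (Pt d)) {K : ℕ} (c : Fin K → Pt d) : ℝ :=
  ∏ j : Fin K, stepProb X c j

/-- Tuples with all entries in the finite set `X`. -/
def tupleSupp (X : Finset (Pt d)) (K : ℕ) : Finset (Fin K → Pt d) :=
  Fintype.piFinset fun _ => X

/-- The nearest centroid among the entries of `c` to `x`, ties broken by smallest index
(junk value `x` when `K = 0`). -/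
def assignPt {K : ℕ} (c : Fin K → Pt d) (x : Pt d) : Pt d :=
  if h : (Finset.univ.filter fun j : Fin K => ∀ i, dist x (c j) ≤ dist x (c i)).Nonempty
  then c ((Finset.univ.filter fun j : Fin K => ∀ i, dist x (c j) ≤ dist x (c i)).min' h)
  else x

/-- Transition probability of Algorithm 3 (unlearning for K-means++ initialization):
given the trained tuple `C` on the original set, `unlearnProb X' XR C C'` is the
probability that the procedure outputs `C'`, where `X'` is the retained set and `XR` the
removal set.  If no entry of `C` lies in `XR` the output is `C` itself; otherwise the
prefix of `C` before the first entry in `XR` is kept and the remaining centroids are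
resampled by continuing K-means++ sampling on `X'`. -/
def unlearnProb (X' XR : Finset (Pt d)) {K : ℕ} (C C' : Fin K → Pt d) : ℝ :=
  if h : (Finset.univ.filter fun j : Fin K => C j ∈ XR).Nonempty then
    if ∀ j < (Finset.univ.filter fun j : Fin K => C j ∈ XR).min' h, C' j = C j then
      ∏ j ∈ Finset.univ.filter
          (fun j : Fin K => (Finset.univ.filter fun j' : Fin K => C j' ∈ XR).min' h ≤ j),
        stepProb X'.val C' j
    else 0
  else if C' = C then 1 else 0

/-- Uniform quantizer with step `γ`: each coordinate is sent to the center of its bin. -/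
def quant {d : ℕ} (γ : ℝ) (y : Pt d) : Pt d :=
  WithLp.toLp 2 fun i => γ * ((⌊y i / γ⌋ : ℤ) + 1 / 2)

/-- The multiset of quantized assigned local centroids, with multiplicities: this carries
exactly the information of the aggregated count vector `q = Σ_l q^(l)` over the
quantization bins. -/
def qMS {L K : ℕ} (γ : ℝ) (Xc : Fin L → Finset (Pt d)) (cc : Fin L → Fin K → Pt d) :
    Multiset (Pt d) :=
  ∑ l : Fin L, (Xc l).val.map fun x => quant γ (assignPt (cc l) x)

lemma dSet_nonneg (x : Pt d) (C : Finset (Pt d)) : 0 ≤ dSet x C := by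
  unfold dSet
  split
  · next h => exact Finset.le_inf' h _ fun b _ => dist_nonneg
  · exact le_refl 0

lemma dSet_pos (x : Pt d) {C : Finset (Pt d)} (hC : C.Nonempty) (hx : x ∉ C) :
    0 < dSet x C := by
  unfold dSet
  rw [dif_pos hC, Finset.lt_inf'_iff]
  intro b hb
  exact dist_pos.mpr (fun h => hx (h ▸ hb))

lemma kcost_fin (X : Finset (Pt d)) (C : Finset (Pt d)) :
    kcost X.val C = ∑ x ∈ X, dSet x C ^ 2 := rfl

lemma kcost_nonneg (X : Finset (Pt d)) (C : Finset (Pt d)) : 0 ≤ kcost X.val C := by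
  rw [kcost_fin]; exact Finset.sum_nonneg fun x _ => sq_nonneg _

lemma kcost_pos {X C : Finset (Pt d)} (hC : C.Nonempty) (h : C.card < X.card) :
    0 < kcost X.val C := by
  have hns : ¬ X ⊆ C := fun hsub => absurd (Finset.card_le_card hsub) (not_le.mpr h)
  obtain ⟨x, hxX, hxC⟩ := Finset.not_subset.mp hns
  rw [kcost_fin]
  exact Finset.sum_pos' (fun y _ => sq_nonneg _)
    ⟨x, hxX, pow_pos (dSet_pos x hC hxC) 2⟩

lemma count_val (X : Finset (Pt d)) (x : Pt d) :
    (X.val.count x : ℝ) = if x ∈ X then 1 else 0 := by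
  split
  · next h => rw [Multiset.count_eq_one_of_mem X.nodup h]; norm_num
  · next h => rw [Multiset.count_eq_zero_of_notMem h]; norm_num
lemma prefSet_congr {K : ℕ} {c c' : Fin K → Pt d} {j : Fin K}
    (h : ∀ i, i < j → c i = c' i) : prefSet c j = prefSet c' j := by
  unfold prefSet
  apply Finset.image_congr
  intro i hi
  exact h i (Finset.mem_filter.mp hi).2

lemma stepProb_congr (X : Multiset (Pt d)) {K : ℕ} {c c' : Fin K → Pt d} {j : Fin K}
    (h : ∀ i, i ≤ j → c i = c' i) : stepProb X c j = stepProb X c' j := by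
  unfold stepProb
  rw [h j le_rfl, prefSet_congr (fun i hi => h i hi.le)]

lemma stepProb_eq_zero {X : Finset (Pt d)} {K : ℕ} {c : Fin K → Pt d} {j : Fin K}
    (h : c j ∉ X) : stepProb X.val c j = 0 := by
  unfold stepProb
  rw [Multiset.count_eq_zero_of_notMem h]
  simp

lemma kmpp_eq_zero {X : Finset (Pt d)} {K : ℕ} {c : Fin K → Pt d} {j : Fin K}
    (h : c j ∉ X) : kmppProb X.val c = 0 :=
  Finset.prod_eq_zero (Finset.mem_univ j) (stepProb_eq_zero h)

lemma card_filter_lt {K : ℕ} (j : Fin K) :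
    (Finset.univ.filter fun i : Fin K => i < j).card = (j : ℕ) := by
  have : (Finset.univ.filter fun i : Fin K => i < j) = Finset.Iio j := by
    ext i; simp [Finset.mem_Iio]
  rw [this, Fin.card_Iio]

lemma prefSet_card_le {K : ℕ} (c : Fin K → Pt d) (j : Fin K) :
    (prefSet c j).card ≤ (j : ℕ) := by
  unfold prefSet
  exact le_trans Finset.card_image_le (le_of_eq (card_filter_lt j))

lemma prefSet_nonempty {K : ℕ} (c : Fin K → Pt d) {j : Fin K} (hj : (j:ℕ) ≠ 0) :
    (prefSet c j).Nonempty := by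
  have hi : (0:ℕ) < K := lt_of_le_of_lt (Nat.zero_le _) j.isLt
  refine ⟨c ⟨0, hi⟩, Finset.mem_image.mpr ⟨⟨0, hi⟩, ?_, rfl⟩⟩
  simp only [Finset.mem_filter, Finset.mem_univ, true_and]
  exact Fin.lt_def.mpr (Nat.pos_of_ne_zero hj)

lemma kcost_pref_pos {X : Finset (Pt d)} {K : ℕ} (hK : K ≤ X.card)
    (c : Fin K → Pt d) {j : Fin K} (hj : (j:ℕ) ≠ 0) :
    0 < kcost X.val (prefSet c j) := by
  apply kcost_pos (prefSet_nonempty c hj)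
  exact lt_of_le_of_lt (prefSet_card_le c j) (lt_of_lt_of_le j.isLt hK)
lemma prefSet_update {K : ℕ} (w : Fin K → Pt d) (j : Fin K) (x : Pt d) :
    prefSet (Function.update w j x) j = prefSet w j :=
  prefSet_congr (fun i hi => Function.update_of_ne (ne_of_lt hi) _ _)

lemma sum_step_one {X : Finset (Pt d)} {K : ℕ} (hK : K ≤ X.card)
    (w : Fin K → Pt d) (j : Fin K) :
    ∑ x ∈ X, stepProb X.val (Function.update w j x) j = 1 := by
  have hcard : (0:ℝ) < (X.card : ℝ) := by
    have : 0 < K := lt_of_le_of_lt (Nat.zero_le _) j.isLt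
    exact_mod_cast lt_of_lt_of_le this hK
  by_cases hj : (j:ℕ) = 0
  · simp only [stepProb, if_pos hj, Function.update_self]
    rw [← Finset.sum_div]
    rw [Finset.sum_congr rfl (fun x hx => count_val X x)]
    simp only [Finset.sum_ite_mem, Finset.inter_self]
    rw [Finset.sum_const, nsmul_eq_mul, mul_one]
    have : (Multiset.card X.val : ℝ) = (X.card : ℝ) := by rfl
    rw [this, div_self (ne_of_gt hcard)]
  · have hφ : 0 < kcost X.val (prefSet w j) := kcost_pref_pos hK w hj
    simp only [stepProb, if_neg hj, Function.update_self, prefSet_update]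
    rw [← Finset.sum_div]
    rw [Finset.sum_congr rfl (fun x hx => by
      rw [count_val, if_pos hx, one_mul])]
    rw [← kcost_fin, div_self (ne_of_gt hφ)]
lemma tail_sum {X : Finset (Pt d)} {K : ℕ} (hK : K ≤ X.card) :
    ∀ (n t : ℕ), t + n = K → ∀ w : Fin K → Pt d,
      (∑ c ∈ tupleSupp X K,
        if ∀ j : Fin K, (j:ℕ) < t → c j = w j then ∏ j, stepProb X.val c j else 0)
      = ∏ j ∈ Finset.univ.filter (fun j : Fin K => (j:ℕ) < t), stepProb X.val w j := by
  intro n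
  induction n with
  | zero =>
    intro t ht w
    have ht0 : K ≤ t := by omega
    have hcond : ∀ c : Fin K → Pt d,
        (∀ j : Fin K, (j:ℕ) < t → c j = w j) ↔ c = w := by
      intro c
      constructor
      · intro h; funext j; exact h j (lt_of_lt_of_le j.isLt ht0)
      · intro h j _; rw [h]
    have hfil : (Finset.univ.filter fun j : Fin K => (j:ℕ) < t) = Finset.univ := by
      apply Finset.filter_true_of_mem
      intro j _; exact lt_of_lt_of_le j.isLt ht0
    rw [hfil]
    rw [Finset.sum_congr rfl (fun c _ => by rw [if_congr (hcond c) rfl rfl])]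
    rw [Finset.sum_ite_eq' (tupleSupp X K) w (fun c => ∏ j, stepProb X.val c j)]
    split
    · rfl
    · next hw =>
      have : ∃ j, w j ∉ X := by
        by_contra hall
        push_neg at hall
        exact hw (Fintype.mem_piFinset.mpr hall)
      obtain ⟨j, hj⟩ := this
      exact (Finset.prod_eq_zero (Finset.mem_univ j) (stepProb_eq_zero hj)).symm
  | succ n IH =>
    intro t ht w
    have htK : t < K := by omega
    set jt : Fin K := ⟨t, htK⟩ with hjt
    have hjtval : (jt:ℕ) = t := rfl
    have step1 : ∀ c ∈ tupleSupp X K,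
        (if ∀ j : Fin K, (j:ℕ) < t → c j = w j then ∏ j, stepProb X.val c j else 0)
        = ∑ x ∈ X, (if ∀ j : Fin K, (j:ℕ) < t + 1 → c j = Function.update w jt x j
            then ∏ j, stepProb X.val c j else 0) := by
      intro c hc
      have hcjt : c jt ∈ X := Fintype.mem_piFinset.mp hc jt
      have hiff : ∀ x : Pt d,
          (∀ j : Fin K, (j:ℕ) < t + 1 → c j = Function.update w jt x j)
          ↔ (c jt = x ∧ ∀ j : Fin K, (j:ℕ) < t → c j = w j) := by
        intro x
        constructor
        · intro h
          refine ⟨by simpa using h jt (by rw [hjtval]; omega), fun j hj => ?_⟩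
          have := h j (by omega)
          rwa [Function.update_of_ne (by
            intro he; rw [he, hjtval] at hj; omega) ] at this
        · rintro ⟨h1, h2⟩ j hj
          by_cases hje : j = jt
          · subst hje; simpa using h1
          · have hjlt : (j:ℕ) < t := by
              rcases Nat.lt_succ_iff_lt_or_eq.mp hj with h | h
              · exact h
              · exact absurd (Fin.ext (h.trans hjtval.symm) : j = jt) hje
            rw [Function.update_of_ne hje]
            exact h2 j hjlt
      rw [Finset.sum_congr rfl (fun x _ => by rw [if_congr (hiff x) rfl rfl])]
      have : ∀ x ∈ X, (if c jt = x ∧ ∀ j : Fin K, (j:ℕ) < t → c j = w j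
            then ∏ j, stepProb X.val c j else 0)
          = (if c jt = x then (if ∀ j : Fin K, (j:ℕ) < t → c j = w j
            then ∏ j, stepProb X.val c j else 0) else 0) := by
        intro x _
        by_cases h1 : c jt = x <;> by_cases h2 : ∀ j : Fin K, (j:ℕ) < t → c j = w j <;>
          simp [h1, h2]
      rw [Finset.sum_congr rfl this, Finset.sum_ite_eq (X) (c jt) _, if_pos hcjt]
    rw [Finset.sum_congr rfl step1, Finset.sum_comm]
    have step2 : ∀ x ∈ X,
        (∑ c ∈ tupleSupp X K,
          if ∀ j : Fin K, (j:ℕ) < t + 1 → c j = Function.update w jt x j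
          then ∏ j, stepProb X.val c j else 0)
        = ∏ j ∈ Finset.univ.filter (fun j : Fin K => (j:ℕ) < t + 1),
            stepProb X.val (Function.update w jt x) j := by
      intro x _
      exact IH (t+1) (by omega) (Function.update w jt x)
    rw [Finset.sum_congr rfl step2]
    have hsplit : (Finset.univ.filter fun j : Fin K => (j:ℕ) < t + 1)
        = insert jt (Finset.univ.filter fun j : Fin K => (j:ℕ) < t) := by
      ext j
      simp only [Finset.mem_filter, Finset.mem_univ, true_and, Finset.mem_insert]
      constructor
      · intro h
        rcases Nat.lt_succ_iff_lt_or_eq.mp h with h | h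
        · exact Or.inr h
        · exact Or.inl (Fin.ext (h.trans hjtval.symm))
      · rintro (h | h)
        · rw [h, hjtval]; omega
        · omega
    have hnotmem : jt ∉ (Finset.univ.filter fun j : Fin K => (j:ℕ) < t) := by
      simp only [Finset.mem_filter, Finset.mem_univ, true_and, hjtval]
      omega
    have step3 : ∀ x ∈ X,
        (∏ j ∈ Finset.univ.filter (fun j : Fin K => (j:ℕ) < t + 1),
          stepProb X.val (Function.update w jt x) j)
        = stepProb X.val (Function.update w jt x) jt *
          ∏ j ∈ Finset.univ.filter (fun j : Fin K => (j:ℕ) < t), stepProb X.val w j := by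
      intro x _
      rw [hsplit, Finset.prod_insert hnotmem]
      congr 1
      apply Finset.prod_congr rfl
      intro j hj
      have hjlt : (j:ℕ) < t := (Finset.mem_filter.mp hj).2
      apply stepProb_congr
      intro i hi
      apply Function.update_of_ne
      intro he
      have : (i:ℕ) ≤ (j:ℕ) := hi
      rw [he, hjtval] at this
      omega
    rw [Finset.sum_congr rfl step3, ← Finset.sum_mul, sum_step_one hK w jt, one_mul]
lemma kcost_split {X XR : Finset (Pt d)} (hXR : XR ⊆ X) (S : Finset (Pt d)) :
    kcost X.val S = kcost (X \ XR).val S + kcost XR.val S := by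
  rw [kcost_fin, kcost_fin, kcost_fin, Finset.sum_sdiff hXR]

lemma div_key (a b r : ℝ) (hb : b ≠ 0) (hbr : b + r ≠ 0) :
    a / b * (r / (b + r)) = a / b - a / (b + r) := by
  field_simp
  ring

lemma step_relation {X XR : Finset (Pt d)} (hXR : XR ⊆ X) {K : ℕ}
    (hcard' : K ≤ (X \ XR).card) (c' : Fin K → Pt d) (hc' : ∀ j, c' j ∉ XR) (m : Fin K) :
    stepProb (X \ XR).val c' m * (∑ y ∈ XR, stepProb X.val (Function.update c' m y) m)
      = stepProb (X \ XR).val c' m - stepProb X.val c' m := by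
  have hXcard : K ≤ X.card := le_trans hcard' (Finset.card_le_card (Finset.sdiff_subset))
  have hKpos : 0 < K := lt_of_le_of_lt (Nat.zero_le _) m.isLt
  have hcount : ((X \ XR).val.count (c' m) : ℝ) = (X.val.count (c' m) : ℝ) := by
    rw [count_val, count_val]
    by_cases h : c' m ∈ X
    · rw [if_pos h, if_pos (Finset.mem_sdiff.mpr ⟨h, hc' m⟩)]
    · rw [if_neg h, if_neg (fun hh => h (Finset.mem_sdiff.mp hh).1)]
  have hcards : ((X \ XR).card : ℝ) + (XR.card : ℝ) = (X.card : ℝ) := by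
    exact_mod_cast Finset.card_sdiff_add_card_eq_card hXR
  have h1 : (0:ℝ) < ((X \ XR).card : ℝ) := by exact_mod_cast lt_of_lt_of_le hKpos hcard'
  have h2 : (0:ℝ) < (X.card : ℝ) := by exact_mod_cast lt_of_lt_of_le hKpos hXcard
  by_cases hm : (m:ℕ) = 0
  · have hsum : ∑ y ∈ XR, stepProb X.val (Function.update c' m y) m
        = (XR.card : ℝ) / (X.card : ℝ) := by
      rw [Finset.sum_congr rfl (fun y hy => by
        simp only [stepProb, if_pos hm, Function.update_self]
        rw [← Finset.card_def, count_val, if_pos (hXR hy)])]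
      rw [Finset.sum_const, nsmul_eq_mul, mul_one_div]
    rw [hsum]
    simp only [stepProb, if_pos hm]
    rw [← Finset.card_def, ← Finset.card_def, hcount, ← hcards]
    exact div_key _ _ _ (ne_of_gt h1) (by rw [hcards]; exact ne_of_gt h2)
  · set S := prefSet c' m with hS
    have hφ : 0 < kcost X.val S := kcost_pref_pos hXcard c' hm
    have hφ' : 0 < kcost (X \ XR).val S := kcost_pref_pos hcard' c' hm
    have hsum : ∑ y ∈ XR, stepProb X.val (Function.update c' m y) m
        = kcost XR.val S / kcost X.val S := by
      rw [Finset.sum_congr rfl (fun y hy => by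
        simp only [stepProb, if_neg hm, Function.update_self, prefSet_update c' m y]
        rw [count_val, if_pos (hXR hy), one_mul])]
      rw [← Finset.sum_div, ← kcost_fin]
    rw [hsum]
    simp only [stepProb, if_neg hm, ← hS]
    rw [hcount, kcost_split hXR S]
    exact div_key _ _ _ (ne_of_gt hφ') (by rw [← kcost_split hXR S]; exact ne_of_gt hφ)
lemma filter_lt_succ {K : ℕ} (m : Fin K) :
    (Finset.univ.filter fun j : Fin K => (j:ℕ) < (m:ℕ) + 1)
      = insert m (Finset.univ.filter fun j : Fin K => (j:ℕ) < (m:ℕ)) := by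
  ext j
  simp only [Finset.mem_filter, Finset.mem_univ, true_and, Finset.mem_insert]
  constructor
  · intro h
    rcases Nat.lt_succ_iff_lt_or_eq.mp h with h | h
    · exact Or.inr h
    · exact Or.inl (Fin.ext h)
  · rintro (h | h)
    · rw [h]; omega
    · omega

lemma m_notmem_lt {K : ℕ} (m : Fin K) :
    m ∉ (Finset.univ.filter fun j : Fin K => (j:ℕ) < (m:ℕ)) := by
  simp

lemma filter_ge_eq {K : ℕ} (m : Fin K) :
    (Finset.univ.filter fun j : Fin K => m ≤ j)
      = insert m (Finset.univ.filter fun j : Fin K => (m:ℕ) + 1 ≤ (j:ℕ)) := by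
  ext j
  simp only [Finset.mem_filter, Finset.mem_univ, true_and, Finset.mem_insert, Fin.le_def]
  constructor
  · intro h
    rcases Nat.eq_or_lt_of_le h with h | h
    · exact Or.inl (Fin.ext h.symm)
    · exact Or.inr h
  · rintro (h | h)
    · rw [h]
    · omega

lemma m_notmem_ge {K : ℕ} (m : Fin K) :
    m ∉ (Finset.univ.filter fun j : Fin K => (m:ℕ) + 1 ≤ (j:ℕ)) := by
  simp

/-- junk-default minimal index of a hit. -/
def minIdx {K : ℕ} (hK : 1 ≤ K) (XR : Finset (Pt d)) (C0 : Fin K → Pt d) : Fin K :=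
  if h : (Finset.univ.filter fun j : Fin K => C0 j ∈ XR).Nonempty
  then (Finset.univ.filter fun j : Fin K => C0 j ∈ XR).min' h else ⟨0, hK⟩

lemma minIdx_spec {K : ℕ} (hK : 1 ≤ K) (XR : Finset (Pt d)) (C0 : Fin K → Pt d)
    (h : (Finset.univ.filter fun j : Fin K => C0 j ∈ XR).Nonempty) (m : Fin K) :
    minIdx hK XR C0 = m ↔ (C0 m ∈ XR ∧ ∀ j, j < m → C0 j ∉ XR) := by
  rw [minIdx, dif_pos h]
  constructor
  · intro he
    constructor
    · have := Finset.min'_mem _ h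
      rw [he] at this
      exact (Finset.mem_filter.mp this).2
    · intro j hj hmem
      have hjm : j ∈ (Finset.univ.filter fun j : Fin K => C0 j ∈ XR) := by
        simp only [Finset.mem_filter, Finset.mem_univ, true_and]; exact hmem
      have := Finset.min'_le _ j hjm
      rw [he] at this
      exact absurd hj (not_lt.mpr this)
  · rintro ⟨h1, h2⟩
    have hmm : m ∈ (Finset.univ.filter fun j : Fin K => C0 j ∈ XR) := by
      simp only [Finset.mem_filter, Finset.mem_univ, true_and]; exact h1
    have hle : (Finset.univ.filter fun j : Fin K => C0 j ∈ XR).min' h ≤ m :=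
      Finset.min'_le _ m hmm
    have hmem := Finset.min'_mem _ h
    have : C0 ((Finset.univ.filter fun j : Fin K => C0 j ∈ XR).min' h) ∈ XR :=
      (Finset.mem_filter.mp hmem).2
    rcases lt_or_eq_of_le hle with hlt | he
    · exact absurd this (h2 _ hlt)
    · exact he

lemma filter_ge_succ {K : ℕ} (m : Fin K) :
    (Finset.univ.filter fun j : Fin K => (m:ℕ) ≤ (j:ℕ))
      = insert m (Finset.univ.filter fun j : Fin K => (m:ℕ) + 1 ≤ (j:ℕ)) := by
  ext j
  simp only [Finset.mem_filter, Finset.mem_univ, true_and, Finset.mem_insert]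
  constructor
  · intro h
    rcases Nat.eq_or_lt_of_le h with h | h
    · exact Or.inl (Fin.ext h.symm)
    · exact Or.inr h
  · rintro (h | h)
    · rw [h]
    · omega
lemma key_sum {X XR : Finset (Pt d)} (hXR : XR ⊆ X) {K : ℕ} (hK : 1 ≤ K)
    (hcard' : K ≤ (X \ XR).card) (c' : Fin K → Pt d) :
    ∑ C0 ∈ tupleSupp X K, kmppProb X.val C0 * unlearnProb (X \ XR) XR C0 c'
      = kmppProb (X \ XR).val c' := by
  classical
  have hXcard : K ≤ X.card := le_trans hcard' (Finset.card_le_card Finset.sdiff_subset)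
  set p : (Fin K → Pt d) → Prop :=
    fun C0 => (Finset.univ.filter fun j : Fin K => C0 j ∈ XR).Nonempty with hp
  set P : Fin K → ℝ :=
    fun m => ∏ j ∈ Finset.univ.filter (fun j : Fin K => m ≤ j), stepProb (X \ XR).val c' j
    with hPdef
  set Q : ℕ → ℝ :=
    fun t => ∏ j ∈ Finset.univ.filter (fun j : Fin K => (j:ℕ) < t), stepProb X.val c' j
    with hQdef
  set hf : Fin K → ℝ :=
    fun m => ∑ y ∈ XR, stepProb X.val (Function.update c' m y) m with hhfdef
  -- split into hit / no-hit parts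
  rw [← Finset.sum_filter_add_sum_filter_not (tupleSupp X K) p]
  -- no-hit part
  have hnohit : ∑ C0 ∈ (tupleSupp X K).filter (fun C0 => ¬ p C0),
      kmppProb X.val C0 * unlearnProb (X \ XR) XR C0 c'
      = if ∀ j, c' j ∉ XR then kmppProb X.val c' else 0 := by
    have hterm : ∀ C0 ∈ (tupleSupp X K).filter (fun C0 => ¬ p C0),
        kmppProb X.val C0 * unlearnProb (X \ XR) XR C0 c'
          = if c' = C0 then kmppProb X.val C0 else 0 := by
      intro C0 hC0
      have hnp : ¬ p C0 := (Finset.mem_filter.mp hC0).2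
      rw [unlearnProb, dif_neg hnp]
      by_cases h : c' = C0
      · rw [if_pos h, if_pos h, mul_one]
      · rw [if_neg h, if_neg h, mul_zero]
    rw [Finset.sum_congr rfl hterm, Finset.sum_ite_eq]
    by_cases hall : ∀ j, c' j ∉ XR
    · rw [if_pos hall]
      by_cases hmem : c' ∈ tupleSupp X K
      · rw [if_pos]
        rw [Finset.mem_filter]
        refine ⟨hmem, ?_⟩
        simp only [hp]
        rw [Finset.not_nonempty_iff_eq_empty, Finset.filter_eq_empty_iff]
        intro j _
        exact hall j
      · rw [if_neg fun hc => hmem (Finset.mem_filter.mp hc).1]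
        obtain ⟨j, hj⟩ : ∃ j, c' j ∉ X := by
          by_contra hcon
          push_neg at hcon
          exact hmem (Fintype.mem_piFinset.mpr hcon)
        exact (kmpp_eq_zero hj).symm
    · rw [if_neg hall, if_neg]
      intro hc
      have := (Finset.mem_filter.mp hc).2
      push_neg at hall
      obtain ⟨j, hj⟩ := hall
      exact this ⟨j, by simp only [Finset.mem_filter, Finset.mem_univ, true_and]; exact hj⟩
  -- hit part
  have hhit : ∑ C0 ∈ (tupleSupp X K).filter p,
      kmppProb X.val C0 * unlearnProb (X \ XR) XR C0 c'
      = ∑ m : Fin K, (if ∀ j, j < m → c' j ∉ XR then Q (m:ℕ) * hf m else 0) * P m := by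
    have pm_iff : ∀ (m : Fin K) (C0 : Fin K → Pt d),
        (p C0 ∧ minIdx hK XR C0 = m) ↔ (C0 m ∈ XR ∧ ∀ j, j < m → C0 j ∉ XR) := by
      intro m C0
      constructor
      · rintro ⟨h1, h2⟩
        exact (minIdx_spec hK XR C0 h1 m).mp h2
      · rintro ⟨h1, h2⟩
        have hpc : p C0 := ⟨m, by
          simp only [Finset.mem_filter, Finset.mem_univ, true_and]; exact h1⟩
        exact ⟨hpc, (minIdx_spec hK XR C0 hpc m).mpr ⟨h1, h2⟩⟩
    have hstep1 : ∀ C0 ∈ (tupleSupp X K).filter p,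
        kmppProb X.val C0 * unlearnProb (X \ XR) XR C0 c'
          = kmppProb X.val C0 *
            (if ∀ j, j < minIdx hK XR C0 → c' j = C0 j
             then P (minIdx hK XR C0) else 0) := by
      intro C0 hC0
      have hnp : p C0 := (Finset.mem_filter.mp hC0).2
      have hmi : minIdx hK XR C0
          = (Finset.univ.filter fun j : Fin K => C0 j ∈ XR).min' hnp := dif_pos hnp
      rw [unlearnProb, dif_pos hnp, hmi]
    rw [Finset.sum_congr rfl hstep1,
      ← Finset.sum_fiberwise ((tupleSupp X K).filter p) (minIdx hK XR)]
    apply Finset.sum_congr rfl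
    intro m _
    have hfib : ∀ C0 ∈ ((tupleSupp X K).filter p).filter (fun C0 => minIdx hK XR C0 = m),
        kmppProb X.val C0 *
            (if ∀ j, j < minIdx hK XR C0 → c' j = C0 j
             then P (minIdx hK XR C0) else 0)
          = kmppProb X.val C0 * (if ∀ j, j < m → c' j = C0 j then P m else 0) := by
      intro C0 hC0
      rw [(Finset.mem_filter.mp hC0).2]
    rw [Finset.sum_congr rfl hfib]
    by_cases hgood : ∀ j, j < m → c' j ∉ XR
    · rw [if_pos hgood]
      have hsw : ∀ C0 ∈ ((tupleSupp X K).filter p).filter (fun C0 => minIdx hK XR C0 = m),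
          kmppProb X.val C0 * (if ∀ j, j < m → c' j = C0 j then P m else 0)
            = (if ∀ j, j < m → c' j = C0 j then kmppProb X.val C0 else 0) * P m := by
        intro C0 _
        by_cases h : ∀ j, j < m → c' j = C0 j
        · rw [if_pos h, if_pos h]
        · rw [if_neg h, if_neg h, mul_zero, zero_mul]
      rw [Finset.sum_congr rfl hsw, ← Finset.sum_mul]
      congr 1
      rw [Finset.filter_filter, Finset.sum_filter]
      have hper : ∀ C0 ∈ tupleSupp X K,
          (if p C0 ∧ minIdx hK XR C0 = m
           then (if ∀ j, j < m → c' j = C0 j then kmppProb X.val C0 else 0) else 0)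
          = ∑ y ∈ XR, (if ∀ j : Fin K, (j:ℕ) < (m:ℕ) + 1 →
              C0 j = Function.update c' m y j then ∏ j, stepProb X.val C0 j else 0) := by
        intro C0 _
        have hiff : ∀ y : Pt d,
            (∀ j : Fin K, (j:ℕ) < (m:ℕ) + 1 → C0 j = Function.update c' m y j)
              ↔ (C0 m = y ∧ ∀ j, j < m → c' j = C0 j) := by
          intro y
          constructor
          · intro h
            refine ⟨by simpa using h m (by omega), fun j hj => ?_⟩
            have hjm : (j:ℕ) < (m:ℕ) := hj
            have := h j (by omega)
            rw [Function.update_of_ne (by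
              intro he; rw [he] at hjm; omega)] at this
            exact this.symm
          · rintro ⟨h1, h2⟩ j hj
            by_cases hje : j = m
            · subst hje; simpa using h1
            · have hjlt : (j:ℕ) < (m:ℕ) := by
                rcases Nat.lt_succ_iff_lt_or_eq.mp hj with h | h
                · exact h
                · exact absurd (Fin.ext h : j = m) hje
              rw [Function.update_of_ne hje]
              exact (h2 j hjlt).symm
        rw [Finset.sum_congr rfl (fun y _ => by rw [if_congr (hiff y) rfl rfl])]
        have hsplitif : ∀ y ∈ XR,
            (if C0 m = y ∧ ∀ j, j < m → c' j = C0 j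
             then ∏ j, stepProb X.val C0 j else 0)
            = (if C0 m = y then (if ∀ j, j < m → c' j = C0 j
               then ∏ j, stepProb X.val C0 j else 0) else 0) := by
          intro y _
          by_cases h1 : C0 m = y <;> by_cases h2 : ∀ j, j < m → c' j = C0 j <;>
            simp [h1, h2]
        rw [Finset.sum_congr rfl hsplitif, Finset.sum_ite_eq XR (C0 m)]
        rw [if_congr (pm_iff m C0) rfl rfl]
        by_cases hagree : ∀ j, j < m → c' j = C0 j
        · have hpre : ∀ j, j < m → C0 j ∉ XR := by
            intro j hj
            rw [← hagree j hj]
            exact hgood j hj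
          by_cases hA : C0 m ∈ XR
          · rw [if_pos ⟨hA, hpre⟩, if_pos hA, if_pos hagree, if_pos hagree]
            rfl
          · rw [if_neg (by rintro ⟨h1, _⟩; exact hA h1), if_neg hA]
        · simp only [if_neg hagree, ite_self]
      rw [Finset.sum_congr rfl hper, Finset.sum_comm]
      have htails : ∀ y ∈ XR,
          (∑ C0 ∈ tupleSupp X K, if ∀ j : Fin K, (j:ℕ) < (m:ℕ) + 1 →
              C0 j = Function.update c' m y j then ∏ j, stepProb X.val C0 j else 0)
          = stepProb X.val (Function.update c' m y) m * Q (m:ℕ) := by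
        intro y _
        rw [tail_sum hXcard (K - ((m:ℕ)+1)) ((m:ℕ)+1) (by omega) (Function.update c' m y)]
        rw [filter_lt_succ m, Finset.prod_insert (m_notmem_lt m)]
        congr 1
        simp only [hQdef]
        apply Finset.prod_congr rfl
        intro j hj
        have hjlt : (j:ℕ) < (m:ℕ) := (Finset.mem_filter.mp hj).2
        apply stepProb_congr
        intro i hi
        apply Function.update_of_ne
        intro he
        have : (i:ℕ) ≤ (j:ℕ) := hi
        rw [he] at this
        omega
      rw [Finset.sum_congr rfl htails, ← Finset.sum_mul]
      simp only [hhfdef]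
      ring
    · rw [if_neg hgood, zero_mul]
      apply Finset.sum_eq_zero
      intro C0 hC0
      have hmem := Finset.mem_filter.mp hC0
      have hpm : C0 m ∈ XR ∧ ∀ j, j < m → C0 j ∉ XR :=
        (pm_iff m C0).mp ⟨(Finset.mem_filter.mp hmem.1).2, hmem.2⟩
      rw [if_neg, mul_zero]
      intro hagree
      push_neg at hgood
      obtain ⟨j0, hj0lt, hj0⟩ := hgood
      exact hpm.2 j0 hj0lt (hagree j0 hj0lt ▸ hj0)
  rw [hnohit, hhit]
  -- final case analysis
  by_cases hex : ∃ j0 : Fin K, c' j0 ∈ XR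
  · obtain ⟨j0, hj0⟩ := hex
    have hz : kmppProb (X \ XR).val c' = 0 :=
      kmpp_eq_zero (fun hmem => (Finset.mem_sdiff.mp hmem).2 hj0)
    rw [hz]
    have h1 : (if ∀ j, c' j ∉ XR then kmppProb X.val c' else 0) = 0 := by
      rw [if_neg]; push_neg; exact ⟨j0, hj0⟩
    have h2 : ∀ m : Fin K,
        (if ∀ j, j < m → c' j ∉ XR then Q (m:ℕ) * hf m else 0) * P m = 0 := by
      intro m
      by_cases hg : ∀ j, j < m → c' j ∉ XR
      · have hm : m ≤ j0 := not_lt.mp fun hlt => hg j0 hlt hj0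
        have : P m = 0 := by
          apply Finset.prod_eq_zero (i := j0)
          · simp only [Finset.mem_filter, Finset.mem_univ, true_and]; exact hm
          · exact stepProb_eq_zero (fun hmem => (Finset.mem_sdiff.mp hmem).2 hj0)
        rw [this, mul_zero]
      · rw [if_neg hg, zero_mul]
    rw [h1, Finset.sum_congr rfl (fun m _ => h2 m), Finset.sum_const, smul_zero, zero_add]
  · push_neg at hex
    rw [if_pos hex]
    set R : ℕ → ℝ :=
      fun t => ∏ j ∈ Finset.univ.filter (fun j : Fin K => t ≤ (j:ℕ)),
        stepProb (X \ XR).val c' j with hRdef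
    have hPR : ∀ m : Fin K, P m = R (m:ℕ) := by
      intro m
      apply Finset.prod_congr _ (fun _ _ => rfl)
      apply Finset.filter_congr
      intro j _
      exact Iff.rfl
    have hterm : ∀ m : Fin K,
        (if ∀ j, j < m → c' j ∉ XR then Q (m:ℕ) * hf m else 0) * P m
          = (Q (m:ℕ) * R ((m:ℕ)+1) - Q ((m:ℕ)+1) * R ((m:ℕ)+1))
            + (Q (m:ℕ) * R (m:ℕ) - Q (m:ℕ) * R ((m:ℕ)+1)) := by
      intro m
      rw [if_pos (fun j _ => hex j), hPR m]
      have hRsplit : R (m:ℕ) = stepProb (X \ XR).val c' m * R ((m:ℕ)+1) := by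
        simp only [hRdef]
        rw [filter_ge_succ m, Finset.prod_insert (m_notmem_ge m)]
      have hQsplit : Q ((m:ℕ)+1) = stepProb X.val c' m * Q (m:ℕ) := by
        simp only [hQdef]
        rw [filter_lt_succ m, Finset.prod_insert (m_notmem_lt m)]
      have hrel : stepProb (X \ XR).val c' m * hf m
          = stepProb (X \ XR).val c' m - stepProb X.val c' m := by
        simp only [hhfdef]
        exact step_relation hXR hcard' c' hex m
      rw [hRsplit, hQsplit]
      linear_combination (Q (m:ℕ) * R ((m:ℕ)+1)) * hrel
    rw [Finset.sum_congr rfl (fun m _ => hterm m)]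
    have hQ0 : Q 0 = 1 := by
      simp only [hQdef]
      rw [Finset.filter_false_of_mem (fun j _ => by omega), Finset.prod_empty]
    have hRK : R K = 1 := by
      simp only [hRdef]
      rw [Finset.filter_false_of_mem (fun j _ => by
        simp only [not_le]; exact j.isLt), Finset.prod_empty]
    have hQK : Q K = kmppProb X.val c' := by
      simp only [hQdef]
      rw [kmppProb, Finset.filter_true_of_mem (fun j _ => j.isLt)]
    have hR0 : R 0 = kmppProb (X \ XR).val c' := by
      simp only [hRdef]
      rw [kmppProb, Finset.filter_true_of_mem (fun j _ => Nat.zero_le _)]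
    have htel : ∑ m : Fin K,
        ((Q (m:ℕ) * R ((m:ℕ)+1) - Q ((m:ℕ)+1) * R ((m:ℕ)+1))
          + (Q (m:ℕ) * R (m:ℕ) - Q (m:ℕ) * R ((m:ℕ)+1)))
        = kmppProb (X \ XR).val c' - kmppProb X.val c' := by
      have := Fin.sum_univ_eq_sum_range
        (fun t => Q t * R t - Q (t+1) * R (t+1)) K
      calc ∑ m : Fin K,
          ((Q (m:ℕ) * R ((m:ℕ)+1) - Q ((m:ℕ)+1) * R ((m:ℕ)+1))
            + (Q (m:ℕ) * R (m:ℕ) - Q (m:ℕ) * R ((m:ℕ)+1)))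
          = ∑ m : Fin K, (Q (m:ℕ) * R (m:ℕ) - Q ((m:ℕ)+1) * R ((m:ℕ)+1)) := by
            apply Finset.sum_congr rfl; intro m _; ring
        _ = ∑ t ∈ Finset.range K, (Q t * R t - Q (t+1) * R (t+1)) := this
        _ = Q 0 * R 0 - Q K * R K := Finset.sum_range_sub' (fun t => Q t * R t) K
        _ = kmppProb (X \ XR).val c' - kmppProb X.val c' := by
            rw [hQ0, hRK, hQK, hR0]; ring
    rw [htel]
    ring

/-- single-client federated unlearning is exact.  Consider the
quantized federated pipeline in which the server's output `C_s` is sampled from a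
distribution `ν` determined by the aggregated count vector `q` alone.  Upon a removal
request `X_R ⊆ X^(l0)`, client `l0` applies Algorithm 3 (with transition probabilities
`unlearnProb`), the other clients are unchanged, and the server resamples `C_s` from
`ν` at the new aggregate.  Then for every outcome `(cc, C_s)`, the joint probability
after unlearning equals the joint probability of a fresh run of the pipeline on the
dataset in which `X^(l0)` is replaced by `X^(l0) ∖ X_R`. -/
theorem federated_unlearning_is_exact {d L K : ℕ} (hL : 1 ≤ L) (hK : 1 ≤ K)
    (γ : ℝ) (hγ : 0 < γ)
    (Xc : Fin L → Finset (Pt d))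
    (hdisj : ∀ l l', l ≠ l' → Disjoint (Xc l) (Xc l'))
    (hcard : ∀ l, K ≤ (Xc l).card)
    (l0 : Fin L) (XR : Finset (Pt d)) (hXR : XR ⊆ Xc l0)
    (hcard' : K ≤ (Xc l0 \ XR).card)
    (ν : Multiset (Pt d) → Finset (Pt d) → ℝ)
    (Xc' : Fin L → Finset (Pt d))
    (hXc' : ∀ l, Xc' l = if l = l0 then Xc l0 \ XR else Xc l) :
    ∀ (cc : Fin L → Fin K → Pt d) (Cs : Finset (Pt d)),
      (∑ C0 ∈ tupleSupp (Xc l0) K,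
          kmppProb (Xc l0).val C0 * unlearnProb (Xc l0 \ XR) XR C0 (cc l0)) *
          (∏ l ∈ Finset.univ.erase l0, kmppProb (Xc l).val (cc l)) *
          ν (qMS γ Xc' cc) Cs
        = (∏ l : Fin L, kmppProb (Xc' l).val (cc l)) * ν (qMS γ Xc' cc) Cs := by
  intro cc Cs
  rw [key_sum hXR hK hcard' (cc l0)]
  congr 1
  rw [← Finset.mul_prod_erase Finset.univ _ (Finset.mem_univ l0)]
  congr 1
  · rw [hXc' l0, if_pos rfl]
  · apply Finset.prod_congr rfl
    intro l hl
    rw [hXc' l, if_neg (Finset.ne_of_mem_erase hl)]
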